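/- arXiv:2006.08790 — 6 statements merged into one kernel-verified Lean document; each statement's English description precedes it below -/
import Mathlib

section
/- Let Σ ∈ S^p be symmetric positive definite and s ∈ R^p. The block matrix [[Σ, Σ - diag(s)], [Σ - diag(s), Σ]] is positive semidefinite if and only if 0 ⪯ diag(s) ⪯ 2Σ, i.e. s ≥ 0 entrywise and 2Σ - diag(s) ⪰ 0. -/
open Matrix

private lemma qform_identity {p : ℕ} (S : Matrix (Fin p) (Fin p) ℝ) (s : Fin p → ℝ)
    (x y : Fin p → ℝ) :
    Sum.elim x y ⬝ᵥ (Matrix.fromBlocks S (S - diagonal s) (S - diagonal s) S *ᵥ Sum.elim x y) =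
      (1/2) * ((x + y) ⬝ᵥ (((2:ℝ) • S - diagonal s) *ᵥ (x + y))
        + (x - y) ⬝ᵥ (diagonal s *ᵥ (x - y))) := by
  simp only [fromBlocks_mulVec, sumElim_dotProduct_sumElim, sub_mulVec, mulVec_add,
    mulVec_sub, smul_mulVec, dotProduct_add, dotProduct_sub, add_dotProduct,
    sub_dotProduct, dotProduct_smul, smul_eq_mul, Sum.elim_comp_inl, Sum.elim_comp_inr]
  ring

/-- The knockoff block covariance matrix is PSD iff `0 ⪯ diag s ⪯ 2Σ`. -/
theorem knockoff_block_psd_iff {p : ℕ} (S : Matrix (Fin p) (Fin p) ℝ) (s : Fin p → ℝ)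
    (hS : S.PosDef) :
    (Matrix.fromBlocks S (S - diagonal s) (S - diagonal s) S).PosSemidef ↔
      ((∀ i, 0 ≤ s i) ∧ ((2 : ℝ) • S - diagonal s).PosSemidef) := by
  constructor
  · intro h
    constructor
    · rw [← posSemidef_diagonal_iff (d := s)]
      refine posSemidef_iff_dotProduct_mulVec.mpr ⟨isHermitian_diagonal _, fun x => ?_⟩
      have := h.dotProduct_mulVec_nonneg (Sum.elim x (-x))
      rw [star_trivial] at this ⊢
      rw [qform_identity] at this
      simp only [add_neg_cancel, sub_neg_eq_add] at this
      have hx2 : x + x = (2:ℝ) • x := by module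
      rw [hx2] at this
      simp only [mulVec_zero, dotProduct_zero, zero_add, mulVec_smul, dotProduct_smul,
        smul_eq_mul, smul_dotProduct] at this
      nlinarith [this]
    · refine posSemidef_iff_dotProduct_mulVec.mpr ⟨?_, fun x => ?_⟩
      · have h1 : S.IsHermitian := hS.isHermitian
        rw [Matrix.IsHermitian]
        simp [conjTranspose_sub, conjTranspose_smul, h1.eq, (isHermitian_diagonal s).eq]
        rw [show Sᵀ = S from h1]
      · have := h.dotProduct_mulVec_nonneg (Sum.elim x x)
        rw [star_trivial] at this ⊢
        rw [qform_identity] at this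
        simp only [sub_self, mulVec_zero, dotProduct_zero, add_zero] at this
        have hx2 : x + x = (2:ℝ) • x := by module
        rw [hx2] at this
        simp only [mulVec_smul, dotProduct_smul, smul_eq_mul, smul_dotProduct] at this
        nlinarith [this]
  · rintro ⟨hs, h2⟩
    have hD : (diagonal s).PosSemidef := posSemidef_diagonal_iff.mpr hs
    rw [posSemidef_iff_dotProduct_mulVec]
    constructor
    · have h1 : S.IsHermitian := hS.isHermitian
      have hB : (S - diagonal s).IsHermitian := h1.sub (isHermitian_diagonal _)
      rw [Matrix.IsHermitian, fromBlocks_conjTranspose, h1.eq, hB.eq]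
    · intro v
      have hv : v = Sum.elim (v ∘ Sum.inl) (v ∘ Sum.inr) := (Sum.elim_comp_inl_inr v).symm
      rw [star_trivial, hv, qform_identity]
      have t1 := h2.dotProduct_mulVec_nonneg ((v ∘ Sum.inl) + (v ∘ Sum.inr))
      have t2 := hD.dotProduct_mulVec_nonneg ((v ∘ Sum.inl) - (v ∘ Sum.inr))
      rw [star_trivial] at t1 t2
      nlinarith [t1, t2]
end

section
/- Let Σ ∈ S^p be positive definite and s ∈ R^p with 0 ≤ s_i and diag(s) ⪯ 2Σ. Then the matrix Ω = 2·diag(s) - diag(s) Σ^{-1} diag(s) is positive semidefinite. -/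
open Matrix

/-- The conditional knockoff covariance `Ω = 2 diag s - diag s Σ⁻¹ diag s` is PSD. -/
theorem knockoff_conditional_cov_psd {p : ℕ} (S : Matrix (Fin p) (Fin p) ℝ) (s : Fin p → ℝ)
    (hS : S.PosDef) (hs : ∀ i, 0 ≤ s i)
    (h2 : ((2 : ℝ) • S - diagonal s).PosSemidef) :
    ((2 : ℝ) • diagonal s - diagonal s * S⁻¹ * diagonal s).PosSemidef := by
  have hSinv : S⁻¹.IsHermitian := hS.1.inv
  have hD : (diagonal s).IsHermitian := isHermitian_diagonal s
  rw [posSemidef_iff_dotProduct_mulVec]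
  constructor
  · unfold Matrix.IsHermitian
    rw [conjTranspose_sub, conjTranspose_smul, conjTranspose_mul, conjTranspose_mul,
      hD.eq, hSinv.eq, Matrix.mul_assoc, star_trivial]
  · intro x
    have hdet : IsUnit S.det := isUnit_iff_ne_zero.mpr hS.det_pos.ne'
    set z : Fin p → ℝ := S⁻¹ *ᵥ (diagonal s *ᵥ x) with hz
    have hSz : S *ᵥ z = diagonal s *ᵥ x := by
      rw [hz, mulVec_mulVec, ← Matrix.mulVec_mulVec, Matrix.mulVec_mulVec,
        Matrix.mul_nonsing_inv _ hdet, Matrix.one_mulVec]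
    have hquad : ∀ u v : Fin p → ℝ, u ⬝ᵥ (diagonal s *ᵥ v) = ∑ i, s i * u i * v i := by
      intro u v
      simp only [dotProduct, mulVec_diagonal]
      exact Finset.sum_congr rfl fun i _ => by ring
    set a : ℝ := ∑ i, s i * x i * x i with ha
    set b : ℝ := ∑ i, s i * x i * z i with hb
    set c : ℝ := ∑ i, s i * z i * z i with hc
    -- value of the quadratic form
    have hval : star x ⬝ᵥ ((2 : ℝ) • diagonal s - diagonal s * S⁻¹ * diagonal s) *ᵥ x
        = 2 * a - b := by
      rw [star_trivial, Matrix.sub_mulVec, dotProduct_sub, Matrix.smul_mulVec,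
        dotProduct_smul, Matrix.mul_assoc, ← Matrix.mulVec_mulVec, ← Matrix.mulVec_mulVec,
        ← hz, hquad, hquad]
      simp
      rfl
    rw [hval]
    -- a ≥ 0, c ≥ 0
    have ha0 : 0 ≤ a := Finset.sum_nonneg fun i _ => by
      have := mul_self_nonneg (x i); nlinarith [hs i]
    have hc0 : 0 ≤ c := Finset.sum_nonneg fun i _ => by
      have := mul_self_nonneg (z i); nlinarith [hs i]
    -- from h2 at z : c ≤ 2 * b
    have hcb : c ≤ 2 * b := by
      have h := h2.dotProduct_mulVec_nonneg z
      rw [star_trivial, Matrix.sub_mulVec, dotProduct_sub, Matrix.smul_mulVec,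
        dotProduct_smul, hSz, hquad, hquad] at h
      have hbz : (∑ i, s i * z i * x i) = b := Finset.sum_congr rfl fun i _ => by ring
      rw [hbz] at h
      simp only [smul_eq_mul] at h
      linarith
    -- Cauchy–Schwarz : b ^ 2 ≤ a * c
    have hcs : b ^ 2 ≤ a * c := by
      have h := Finset.sum_mul_sq_le_sq_mul_sq Finset.univ
        (fun i => Real.sqrt (s i) * x i) (fun i => Real.sqrt (s i) * z i)
      have e1 : ∑ i, (Real.sqrt (s i) * x i) * (Real.sqrt (s i) * z i) = b :=
        Finset.sum_congr rfl fun i _ => by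
          rw [show Real.sqrt (s i) * x i * (Real.sqrt (s i) * z i)
            = Real.sqrt (s i) * Real.sqrt (s i) * x i * z i by ring,
            Real.mul_self_sqrt (hs i)]
      have e2 : ∑ i, (Real.sqrt (s i) * x i) ^ 2 = a :=
        Finset.sum_congr rfl fun i _ => by
          rw [mul_pow, sq, Real.mul_self_sqrt (hs i)]; ring
      have e3 : ∑ i, (Real.sqrt (s i) * z i) ^ 2 = c :=
        Finset.sum_congr rfl fun i _ => by
          rw [mul_pow, sq, Real.mul_self_sqrt (hs i)]; ring
      rwa [e1, e2, e3] at h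
    nlinarith [sq_nonneg b, sq_nonneg (2 * a - b), mul_nonneg ha0 hc0]
end

section
/- Let A = 2Σ - diag(s) be positive definite, j ∈ [p], Q_j = A_{j^c,j^c}, ζ = 2Σ_{jj} - s_j, and let ỹ ∈ R^p be the j-th column of 2Σ with its j-th entry set to zero. If A = L L^T is the Cholesky factorization and x solves L x = ỹ, then 4 Σ_{j^c,j}^T Q_j^{-1} Σ_{j^c,j} = ζ ||x||² / (ζ + ||x||²). -/
open Matrix

def msub {p : ℕ} (M : Matrix (Fin p) (Fin p) ℝ) (j : Fin p) :
    Matrix {i : Fin p // i ≠ j} {i : Fin p // i ≠ j} ℝ :=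
  M.submatrix Subtype.val Subtype.val

def mcol {p : ℕ} (M : Matrix (Fin p) (Fin p) ℝ) (j : Fin p) :
    {i : Fin p // i ≠ j} → ℝ :=
  fun i => M i.val j

private lemma sum_split {p : ℕ} (j : Fin p) (f : Fin p → ℝ) :
    ∑ i, f i = f j + ∑ i : {i : Fin p // i ≠ j}, f i.1 := by
  rw [Fintype.sum_eq_add_sum_compl j f]
  congr 1
  rw [← Finset.sum_subtype ({j}ᶜ : Finset (Fin p)) (by intro x; simp) f]

/-- Computing the Schur-complement quadratic form from a Cholesky triangular solve:
if `A = 2Σ - diag s = L Lᵀ` with `L` lower triangular, `ỹ` is the `j`-th column of `2Σ`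
with its `j`-th entry zeroed, and `L x = ỹ`, then
`4 Σ_{j^c,j}ᵀ Q_j⁻¹ Σ_{j^c,j} = ζ ‖x‖² / (ζ + ‖x‖²)` where `ζ = 2Σ_{jj} - s_j`. -/
theorem cholesky_schur_quadratic {p : ℕ} (S : Matrix (Fin p) (Fin p) ℝ) (s : Fin p → ℝ)
    (j : Fin p) (hS : S.IsSymm)
    (A : Matrix (Fin p) (Fin p) ℝ) (hAdef : A = (2 : ℝ) • S - diagonal s) (hA : A.PosDef)
    (Qj : Matrix {i : Fin p // i ≠ j} {i : Fin p // i ≠ j} ℝ) (hQdef : Qj = msub A j)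
    (ζ : ℝ) (hζ : ζ = 2 * S j j - s j)
    (ytil : Fin p → ℝ) (hy : ∀ i, ytil i = if i = j then 0 else 2 * S i j)
    (L : Matrix (Fin p) (Fin p) ℝ) (hL : ∀ i i' : Fin p, i < i' → L i i' = 0)
    (hchol : A = L * Lᵀ)
    (x : Fin p → ℝ) (hx : L *ᵥ x = ytil) :
    4 * (mcol S j ⬝ᵥ (Qj⁻¹ *ᵥ mcol S j)) = ζ * (x ⬝ᵥ x) / (ζ + x ⬝ᵥ x) := by
  classical
  -- symmetry of A
  have hAsym : ∀ i k, A i k = A k i := by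
    intro i k
    have h := congrFun (congrFun hA.isHermitian.eq k) i
    simpa [Matrix.conjTranspose_apply] using h
  -- entries of A
  have hAentry : ∀ i : Fin p, i ≠ j → A i j = 2 * S i j := by
    intro i hij
    simp [hAdef, Matrix.diagonal_apply_ne _ hij, Matrix.sub_apply]
  have hAjj : A j j = ζ := by
    simp [hAdef, hζ, Matrix.sub_apply]
  -- Qj is positive definite
  have hQpd : Qj.PosDef := by
    rw [hQdef]
    refine Matrix.PosDef.of_dotProduct_mulVec_pos ?_ ?_
    · exact hA.isHermitian.submatrix _
    · intro v hv
      set w : Fin p → ℝ := fun i => if h : i = j then 0 else v ⟨i, h⟩ with hw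
      have hwne : w ≠ 0 := by
        intro h
        apply hv
        funext i
        have := congrFun h i.1
        simpa [hw, i.2] using this
      have hpos := hA.dotProduct_mulVec_pos hwne
      have hcalc : star w ⬝ᵥ A *ᵥ w = star v ⬝ᵥ (msub A j) *ᵥ v := by
        simp only [star_trivial, dotProduct, Matrix.mulVec, msub]
        rw [sum_split j]
        simp only [hw, dif_pos, zero_mul, zero_add]
        refine Finset.sum_congr rfl fun i _ => ?_
        congr 1
        · simp [i.2]
        · rw [sum_split j]
          simp only [dif_pos, mul_zero, zero_add]
          refine Finset.sum_congr rfl fun k _ => ?_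
          simp [Matrix.submatrix_apply, k.2]
      rw [hcalc] at hpos
      exact hpos
  have hQunit : IsUnit Qj.det := (Matrix.isUnit_iff_isUnit_det _).mp hQpd.isUnit
  -- the vector c and u
  set c : {i : Fin p // i ≠ j} → ℝ := fun i => A i.1 j with hc
  set u : {i : Fin p // i ≠ j} → ℝ := Qj⁻¹ *ᵥ c with hu
  have hQu : Qj *ᵥ u = c := by
    rw [hu, Matrix.mulVec_mulVec, Matrix.mul_nonsing_inv _ hQunit, Matrix.one_mulVec]
  set t : ℝ := c ⬝ᵥ u with ht
  have hsubj : ∑ k : {i : Fin p // i ≠ j}, A j k.1 * u k = t := by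
    rw [ht, dotProduct]
    exact Finset.sum_congr rfl fun k _ => by rw [hAsym j k.1]
  have hsubQ : ∀ (i : Fin p) (h : i ≠ j),
      ∑ k : {i : Fin p // i ≠ j}, A i k.1 * u k = c ⟨i, h⟩ := by
    intro i h
    have : ∑ k : {i : Fin p // i ≠ j}, A i k.1 * u k = (Qj *ᵥ u) ⟨i, h⟩ := by
      rw [hQdef, Matrix.mulVec, dotProduct]
      exact Finset.sum_congr rfl fun k _ => rfl
    rw [this, hQu]
  -- Schur complement positivity: 0 < ζ - t
  have hschur : 0 < ζ - t := by
    set w : Fin p → ℝ := fun i => if h : i = j then -1 else u ⟨i, h⟩ with hw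
    have hwne : w ≠ 0 := by
      intro h
      have := congrFun h j
      simp [hw] at this
    have hpos := hA.dotProduct_mulVec_pos hwne
    have hAw : ∀ i : Fin p, (A *ᵥ w) i
        = A i j * (-1) + ∑ k : {i : Fin p // i ≠ j}, A i k.1 * u k := by
      intro i
      show ∑ k, A i k * w k = _
      rw [sum_split j (fun k => A i k * w k)]
      simp only [hw, dif_pos]
      congr 1
      refine Finset.sum_congr rfl fun k _ => by simp [k.2]
    have hcalc : star w ⬝ᵥ A *ᵥ w = ζ - t := by
      simp only [star_trivial, dotProduct]
      rw [sum_split j (fun k => w k * (A *ᵥ w) k)]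
      have h1 : w j * (A *ᵥ w) j = ζ - t := by
        rw [hAw j, hAjj, hsubj]
        simp [hw]
        ring
      have h2 : ∀ k : {i : Fin p // i ≠ j}, w k.1 * (A *ᵥ w) k.1 = 0 := by
        intro k
        rw [hAw k.1, hsubQ k.1 k.2]
        have : c ⟨k.1, k.2⟩ = A k.1 j := rfl
        rw [this]
        ring
      rw [h1, Finset.sum_congr rfl fun k _ => h2 k]
      simp
    rw [hcalc] at hpos
    exact hpos
  -- t ≥ 0
  have ht0 : 0 ≤ t := by
    by_cases hcz : c = 0
    · simp [ht, hcz]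
    · have := hQpd.inv.dotProduct_mulVec_pos hcz
      simpa [ht, hu] using this.le
  have hζpos : 0 < ζ := lt_of_le_of_lt ht0 (by linarith)
  have hβne : ζ - t ≠ 0 := ne_of_gt hschur
  -- the solution vector v of A v = ytil
  set v : Fin p → ℝ := fun i => if h : i = j then -(t / (ζ - t)) else (ζ / (ζ - t)) * u ⟨i, h⟩
    with hv
  have hexp : ∀ i : Fin p, (A *ᵥ v) i
      = A i j * (-(t / (ζ - t))) + (ζ / (ζ - t)) * ∑ k : {i : Fin p // i ≠ j}, A i k.1 * u k := by
    intro i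
    show ∑ k, A i k * v k = _
    rw [sum_split j (fun k => A i k * v k)]
    simp only [hv, dif_pos]
    rw [Finset.mul_sum]
    congr 1
    refine Finset.sum_congr rfl fun k _ => ?_
    simp only [dif_neg k.2]
    ring
  have hAv : A *ᵥ v = ytil := by
    funext i
    rcases eq_or_ne j i with rfl | hij
    · rw [hexp j, hAjj, hsubj, hy j, if_pos rfl]
      field_simp
      ring
    · have h : i ≠ j := hij.symm
      rw [hexp i, hsubQ i h]
      have : c ⟨i, h⟩ = A i j := rfl
      rw [this, hy i, if_neg h, ← hAentry i h]
      field_simp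
      ring
  -- L is invertible
  have hLunit : IsUnit L := by
    rw [Matrix.isUnit_iff_isUnit_det]
    have hdet : A.det = L.det * L.det := by
      rw [hchol, Matrix.det_mul, Matrix.det_transpose]
    have hne : A.det ≠ 0 := ne_of_gt hA.det_pos
    rw [hdet] at hne
    exact isUnit_iff_ne_zero.mpr fun h => hne (by rw [h]; ring)
  -- x ⬝ x = ytil ⬝ v
  have hLtv : Lᵀ *ᵥ v = x := by
    have h1 : L *ᵥ (Lᵀ *ᵥ v) = L *ᵥ x := by
      rw [Matrix.mulVec_mulVec, ← hchol, hAv, hx]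
    exact (Matrix.mulVec_injective_iff_isUnit.mpr hLunit) h1
  have hxx : x ⬝ᵥ x = ytil ⬝ᵥ v := by
    have : ytil ⬝ᵥ v = x ⬝ᵥ x := by
      rw [← hx, dotProduct_comm, dotProduct_mulVec, ← Matrix.mulVec_transpose,
        hLtv, dotProduct_comm]
    exact this.symm
  -- ytil ⬝ v = (ζ/(ζ-t)) * t
  have hyv : ytil ⬝ᵥ v = (ζ / (ζ - t)) * t := by
    simp only [dotProduct]
    rw [sum_split j (fun k => ytil k * v k)]
    rw [hy j, if_pos rfl, zero_mul, zero_add]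
    have hterm : ∀ k : {i : Fin p // i ≠ j}, ytil k.1 * v k.1
        = (ζ / (ζ - t)) * (c k * u k) := by
      intro k
      rw [hy k.1, if_neg k.2]
      simp only [hv, dif_neg k.2]
      have : c k = 2 * S k.1 j := by
        show A k.1 j = 2 * S k.1 j
        exact hAentry k.1 k.2
      rw [this]
      ring
    rw [Finset.sum_congr rfl fun k _ => hterm k, ← Finset.mul_sum, ht]
    rfl
  -- 4 * (mcol S j ⬝ Qj⁻¹ mcol S j) = t
  have hc2 : c = (2 : ℝ) • mcol S j := by
    funext i
    show A i.1 j = 2 * S i.1 j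
    exact hAentry i.1 i.2
  have hct : 4 * (mcol S j ⬝ᵥ (Qj⁻¹ *ᵥ mcol S j)) = t := by
    rw [ht, hu, hc2, Matrix.mulVec_smul, smul_dotProduct, dotProduct_smul,
      smul_smul]
    norm_num [smul_eq_mul]
  rw [hct, hxx, hyv]
  have hne2 : ζ + ζ / (ζ - t) * t ≠ 0 := by
    have : ζ + ζ / (ζ - t) * t = ζ * ζ / (ζ - t) := by field_simp; ring
    rw [this]
    positivity
  field_simp
  ring
end

section
/- Under the factor model Σ = D + U U^T with the setup of the previous statement (D̃_j and I_k + 2M_j invertible), the quantity α = 2Σ_{jj} - 4 Σ_{j^c,j}^T Q_j^{-1} Σ_{j^c,j} - λ equals (2Σ_{jj} - 4 U_{j,:} M_j U_{j,:}^T - λ) + 8 U_{j,:} M_j (I_k + 2M_j)^{-1} M_j U_{j,:}^T, where M_j = U_{j^c,:}^T D̃_j^{-1} U_{j^c,:}. -/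
open Matrix

def rowsub {p k : ℕ} (U : Matrix (Fin p) (Fin k) ℝ) (j : Fin p) :
    Matrix {i : Fin p // i ≠ j} (Fin k) ℝ :=
  U.submatrix Subtype.val id

/-- Under the factor model, the coordinate update value
`α = 2Σ_{jj} - 4 Σ_{j^c,j}ᵀ Q_j⁻¹ Σ_{j^c,j} - λ` decomposes into the two terms
`(2Σ_{jj} - 4 U_{j,:} M_j U_{j,:}ᵀ - λ) + 8 U_{j,:} M_j (I + 2M_j)⁻¹ M_j U_{j,:}ᵀ`. -/
theorem factor_model_alpha_decomposition {p k : ℕ}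
    (D : Matrix (Fin p) (Fin p) ℝ) (hDdiag : ∀ i i' : Fin p, i ≠ i' → D i i' = 0)
    (U : Matrix (Fin p) (Fin k) ℝ) (s : Fin p → ℝ) (j : Fin p) (l : ℝ)
    (Sg : Matrix (Fin p) (Fin p) ℝ) (hSg : Sg = D + U * Uᵀ)
    (Dt : Matrix {i : Fin p // i ≠ j} {i : Fin p // i ≠ j} ℝ)
    (hDt : Dt = (2 : ℝ) • msub D j - diagonal (fun i => s i.val))
    (hDtinv : IsUnit Dt.det)
    (Mj : Matrix (Fin k) (Fin k) ℝ)
    (hMj : Mj = (rowsub U j)ᵀ * Dt⁻¹ * rowsub U j)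
    (hIM : IsUnit ((1 : Matrix (Fin k) (Fin k) ℝ) + (2 : ℝ) • Mj).det)
    (Qj : Matrix {i : Fin p // i ≠ j} {i : Fin p // i ≠ j} ℝ)
    (hQj : Qj = (2 : ℝ) • msub Sg j - diagonal (fun i => s i.val))
    (u : Fin k → ℝ) (hu : u = fun a => U j a) :
    2 * Sg j j - 4 * (mcol Sg j ⬝ᵥ (Qj⁻¹ *ᵥ mcol Sg j)) - l =
      (2 * Sg j j - 4 * (u ⬝ᵥ (Mj *ᵥ u)) - l) +
        8 * (u ⬝ᵥ ((Mj * ((1 : Matrix (Fin k) (Fin k) ℝ) + (2 : ℝ) • Mj)⁻¹ * Mj) *ᵥ u)) := by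
  classical
  set V := rowsub U j with hV
  -- column of Sigma is V *ᵥ u
  have hcol : mcol Sg j = V *ᵥ u := by
    funext i
    have hD0 : D i.val j = 0 := hDdiag i.val j i.prop
    simp [mcol, hSg, hV, rowsub, mulVec, dotProduct, hu, Matrix.add_apply,
      Matrix.mul_apply, hD0, Matrix.submatrix_apply]
  -- Qj = Dt + V * (2•1) * Vᵀ
  have hmsub : msub Sg j = msub D j + V * Vᵀ := by
    ext i i'
    simp [msub, hSg, hV, rowsub, Matrix.add_apply, Matrix.mul_apply,
      Matrix.submatrix_apply]
  have hQ : Qj = Dt + V * ((2:ℝ) • (1 : Matrix (Fin k) (Fin k) ℝ)) * Vᵀ := by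
    have h2 : V * ((2:ℝ) • (1 : Matrix (Fin k) (Fin k) ℝ)) * Vᵀ = (2:ℝ) • (V * Vᵀ) := by
      rw [Matrix.mul_smul, Matrix.mul_one, Matrix.smul_mul]
    rw [hQj, hmsub, hDt, h2]
    module
  have hDtU : IsUnit Dt := (Matrix.isUnit_iff_isUnit_det Dt).2 hDtinv
  have hCU : IsUnit ((2:ℝ) • (1 : Matrix (Fin k) (Fin k) ℝ)) := by
    rw [Matrix.isUnit_iff_isUnit_det, Matrix.det_smul, Matrix.det_one, mul_one]
    exact IsUnit.pow _ (by norm_num : IsUnit (2:ℝ))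
  have hCinv : ((2:ℝ) • (1 : Matrix (Fin k) (Fin k) ℝ))⁻¹
      = (2⁻¹:ℝ) • (1 : Matrix (Fin k) (Fin k) ℝ) := by
    apply Matrix.inv_eq_right_inv
    rw [smul_mul_assoc, Matrix.mul_smul, Matrix.mul_one, smul_smul]
    norm_num
  set B : Matrix (Fin k) (Fin k) ℝ := (1 : Matrix (Fin k) (Fin k) ℝ) + (2:ℝ) • Mj with hB
  have hsum : (2⁻¹:ℝ) • (1 : Matrix (Fin k) (Fin k) ℝ) + Vᵀ * Dt⁻¹ * V = (2⁻¹:ℝ) • B := by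
    rw [hB, ← hMj, smul_add, smul_smul]
    norm_num
  have hBU : IsUnit B := (Matrix.isUnit_iff_isUnit_det B).2 hIM
  have hsumU : IsUnit (((2:ℝ) • (1 : Matrix (Fin k) (Fin k) ℝ))⁻¹ + Vᵀ * Dt⁻¹ * V) := by
    rw [hCinv, hsum, Matrix.isUnit_iff_isUnit_det, Matrix.det_smul]
    exact (IsUnit.pow _ (by norm_num : IsUnit (2⁻¹:ℝ))).mul hIM
  have hsuminv : (((2:ℝ) • (1 : Matrix (Fin k) (Fin k) ℝ))⁻¹ + Vᵀ * Dt⁻¹ * V)⁻¹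
      = (2:ℝ) • B⁻¹ := by
    rw [hCinv, hsum]
    apply Matrix.inv_eq_right_inv
    rw [smul_mul_assoc, Matrix.mul_smul, Matrix.mul_nonsing_inv _ hIM, smul_smul]
    norm_num
  have hQinv : Qj⁻¹ = Dt⁻¹ - Dt⁻¹ * V * ((2:ℝ) • B⁻¹) * Vᵀ * Dt⁻¹ := by
    rw [hQ, Matrix.add_mul_mul_inv_eq_sub _ _ _ _ hDtU hCU hsumU, hsuminv]
  -- the quadratic form
  have hquad : ∀ A : Matrix {i : Fin p // i ≠ j} {i : Fin p // i ≠ j} ℝ,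
      (V *ᵥ u) ⬝ᵥ (A *ᵥ (V *ᵥ u)) = u ⬝ᵥ ((Vᵀ * A * V) *ᵥ u) := by
    intro A
    rw [← Matrix.mulVec_mulVec, ← Matrix.mulVec_mulVec,
      Matrix.dotProduct_mulVec u Vᵀ, Matrix.vecMul_transpose]
  have hmid : Vᵀ * Qj⁻¹ * V = Mj - (2:ℝ) • (Mj * B⁻¹ * Mj) := by
    rw [hQinv]
    have : Vᵀ * (Dt⁻¹ - Dt⁻¹ * V * ((2:ℝ) • B⁻¹) * Vᵀ * Dt⁻¹) * V
        = Vᵀ * Dt⁻¹ * V - (2:ℝ) • ((Vᵀ * Dt⁻¹ * V) * B⁻¹ * (Vᵀ * Dt⁻¹ * V)) := by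
      rw [Matrix.mul_sub, Matrix.sub_mul]
      simp only [Matrix.mul_smul, Matrix.smul_mul]
      congr 1
      congr 1
      simp only [Matrix.mul_assoc]
    rw [this, ← hMj]
  have key : mcol Sg j ⬝ᵥ (Qj⁻¹ *ᵥ mcol Sg j)
      = u ⬝ᵥ (Mj *ᵥ u) - 2 * (u ⬝ᵥ ((Mj * B⁻¹ * Mj) *ᵥ u)) := by
    rw [hcol, hquad, hmid, Matrix.sub_mulVec, dotProduct_sub,
      Matrix.smul_mulVec, dotProduct_smul, smul_eq_mul]
  rw [key, hB]
  ring
end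

section
/- Let Ω = C + Z Z^T with C ∈ R^{p×p} diagonal, Z ∈ R^{p×k}, and Ω positive semidefinite. Define recursively M_1 = I_k, and for j = 1,…,p: t_j = M_j z_j, Δ_{jj} = C_{jj} + z_j^T t_j, b_j = t_j/Δ_{jj} and M_{j+1} = M_j - t_j t_j^T/Δ_{jj} if Δ_{jj} > 0, else b_j = 0 and M_{j+1} = M_j (where z_j^T is the j-th row of Z). Then each Δ_{jj} ≥ 0, and setting L to be the unit lower triangular matrix with L_{ij} = z_i^T b_j for i > j and Δ = diag(Δ_{11},…,Δ_{pp}), one has Ω = L Δ L^T. -/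
open Matrix

private lemma dot_expand {m : Type*} [Fintype m] (A : Matrix m m ℝ) (u v : m → ℝ) :
    u ⬝ᵥ A *ᵥ v = ∑ i, ∑ i', u i * A i i' * v i' := by
  simp [dotProduct, mulVec, Finset.mul_sum, mul_assoc]

private lemma psd_cauchy {m : Type*} [Fintype m] {A : Matrix m m ℝ} (hA : A.PosSemidef)
    (x y : m → ℝ) : (x ⬝ᵥ A *ᵥ y) ^ 2 ≤ (x ⬝ᵥ A *ᵥ x) * (y ⬝ᵥ A *ᵥ y) := by
  have hsym : ∀ u v : m → ℝ, u ⬝ᵥ A *ᵥ v = v ⬝ᵥ A *ᵥ u := by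
    intro u v
    rw [dot_expand, dot_expand, Finset.sum_comm]
    refine Finset.sum_congr rfl fun i _ => Finset.sum_congr rfl fun i' _ => ?_
    have := hA.1.apply i' i
    rw [star_trivial] at this
    rw [← this]; ring
  have key : ∀ r : ℝ, 0 ≤ (y ⬝ᵥ A *ᵥ y) * (r * r) + (2 * (x ⬝ᵥ A *ᵥ y)) * r + (x ⬝ᵥ A *ᵥ x) := by
    intro r
    have h0 := hA.dotProduct_mulVec_nonneg (x + r • y)
    rw [star_trivial] at h0
    have hexp : (x + r • y) ⬝ᵥ A *ᵥ (x + r • y) =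
        (y ⬝ᵥ A *ᵥ y) * (r * r) + (2 * (x ⬝ᵥ A *ᵥ y)) * r + (x ⬝ᵥ A *ᵥ x) := by
      simp only [add_dotProduct, mulVec_add, mulVec_smul, dotProduct_add,
        smul_dotProduct, dotProduct_smul, smul_eq_mul, hsym y x]
      ring
    linarith [hexp ▸ h0]
  have hdisc := discrim_le_zero key
  rw [discrim] at hdisc
  nlinarith [hdisc]

private lemma dot_sub_vecMulVec {k : ℕ} (A : Matrix (Fin k) (Fin k) ℝ) (c : ℝ)
    (w x y : Fin k → ℝ) :
    x ⬝ᵥ ((A - c • vecMulVec w w) *ᵥ y) = x ⬝ᵥ (A *ᵥ y) - c * (x ⬝ᵥ w) * (w ⬝ᵥ y) := by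
  rw [dot_expand, dot_expand]
  simp only [Matrix.sub_apply, Matrix.smul_apply, vecMulVec_apply, smul_eq_mul, dotProduct]
  rw [show c * (∑ a, x a * w a) * (∑ b, w b * y b)
      = c * ((∑ a, x a * w a) * (∑ b, w b * y b)) by ring,
    show c * ((∑ a, x a * w a) * (∑ b, w b * y b))
      = ∑ a, ∑ b, x a * (c * (w a * w b)) * y b by
    rw [Finset.sum_mul_sum, Finset.mul_sum]
    exact Finset.sum_congr rfl fun a _ => by
      rw [Finset.mul_sum]
      exact Finset.sum_congr rfl fun b _ => by ring]
  rw [← Finset.sum_sub_distrib]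
  exact Finset.sum_congr rfl fun a _ => by
    rw [← Finset.sum_sub_distrib]
    exact Finset.sum_congr rfl fun b _ => by ring


/-- Correctness of the `L Δ Lᵀ` factorization of a diagonal-plus-low-rank PSD matrix
`Ω = C + Z Zᵀ` (Smola & Vishwanathan): the recursively computed pivots `Δ_{jj}` are
nonnegative and `Ω = L Δ Lᵀ` with `L` unit lower triangular, `L_{ij} = z_iᵀ b_j` for `i > j`. -/
theorem ldl_factorization_diag_plus_low_rank {p k : ℕ}
    (C : Matrix (Fin p) (Fin p) ℝ) (hCdiag : ∀ i i' : Fin p, i ≠ i' → C i i' = 0)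
    (Z : Matrix (Fin p) (Fin k) ℝ)
    (hΩ : (C + Z * Zᵀ).PosSemidef)
    (M : ℕ → Matrix (Fin k) (Fin k) ℝ) (hM0 : M 0 = 1)
    (t b : Fin p → Fin k → ℝ) (d : Fin p → ℝ)
    (ht : ∀ j : Fin p, t j = (M j) *ᵥ (fun a => Z j a))
    (hd : ∀ j : Fin p, d j = C j j + (fun a => Z j a) ⬝ᵥ t j)
    (hb : ∀ j : Fin p, b j = if 0 < d j then (d j)⁻¹ • t j else 0)
    (hMs : ∀ j : Fin p,
      M (j + 1) = if 0 < d j then M j - (d j)⁻¹ • vecMulVec (t j) (t j) else M j)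
    (L : Matrix (Fin p) (Fin p) ℝ)
    (hL : ∀ i i' : Fin p, L i i' =
      if i = i' then 1 else if i' < i then (fun a => Z i a) ⬝ᵥ b i' else 0) :
    (∀ j : Fin p, 0 ≤ d j) ∧ C + Z * Zᵀ = L * diagonal d * Lᵀ := by
  classical
  obtain ⟨R, hR⟩ : ∃ R : ℕ → Matrix (Fin p) (Fin p) ℝ, ∀ n (i i' : Fin p),
      R n i i' = if n ≤ (i : ℕ) ∧ n ≤ (i' : ℕ) then
        (if i = i' then C i i else 0) + (fun a => Z i a) ⬝ᵥ (M n *ᵥ (fun a => Z i' a))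
      else 0 :=
    ⟨fun n => Matrix.of fun i i' => _, fun _ _ _ => rfl⟩
  -- diagonal entry of R at step j
  have hRdiag : ∀ j : Fin p, R (j : ℕ) j j = d j := by
    intro j
    rw [hR]
    simp only [le_refl, and_self, if_true, if_pos rfl]
    rw [hd j, ht j]
  -- main induction
  have key : ∀ n : ℕ, n ≤ p →
      (∀ i i' : Fin p, (C + Z * Zᵀ) i i' =
        (∑ m : Fin p, if (m : ℕ) < n then d m * L i m * L i' m else 0) + R n i i')
      ∧ (R n).PosSemidef := by
    intro n
    induction n with
    | zero =>
      intro _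
      have hR0 : R 0 = C + Z * Zᵀ := by
        ext i i'
        rw [hR, if_pos ⟨Nat.zero_le _, Nat.zero_le _⟩, hM0, one_mulVec]
        by_cases hii : i = i'
        · subst hii
          simp [Matrix.add_apply, Matrix.mul_apply, dotProduct]
        · rw [if_neg hii]
          simp [Matrix.add_apply, Matrix.mul_apply, dotProduct, hCdiag i i' hii]
      refine ⟨fun i i' => ?_, hR0 ▸ hΩ⟩
      rw [hR0]
      simp
    | succ n ih =>
      intro hn1
      have hn : n < p := Nat.lt_of_lt_of_le (Nat.lt_succ_self n) hn1
      obtain ⟨hsum, hpsd⟩ := ih (le_of_lt hn)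
      set j : Fin p := ⟨n, hn⟩ with hj
      have hjn : (j : ℕ) = n := rfl
      have hsymm : ∀ i i' : Fin p, R n i' i = R n i i' := by
        intro i i'
        have := hpsd.1.apply i i'
        rwa [star_trivial] at this
      have hRnjj : R n j j = d j := hRdiag j
      have hdj : 0 ≤ d j := by
        have h1 := hpsd.dotProduct_mulVec_nonneg (Pi.single j 1)
        rw [star_trivial, mulVec_single] at h1
        simpa [single_dotProduct, hRnjj] using h1
      have hLjj : L j j = 1 := by rw [hL, if_pos rfl]
      have hLlow : ∀ i : Fin p, (i : ℕ) < n → L i j = 0 := by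
        intro i hlt
        rw [hL, if_neg, if_neg]
        · rw [Fin.lt_def, hjn]; omega
        · intro h; rw [h, hjn] at hlt; omega
      have hentry : ∀ a b : Fin p,
          (Pi.single a 1 : Fin p → ℝ) ⬝ᵥ R n *ᵥ Pi.single b 1 = R n a b := by
        intro a b
        rw [mulVec_single]
        simp [single_dotProduct]
      have hcol : ∀ i : Fin p, R n i j = d j * L i j := by
        intro i
        rcases lt_trichotomy (i : ℕ) n with hlt | heq | hgt
        · rw [hLlow i hlt, mul_zero, hR, if_neg]
          intro hcon; omega
        · obtain rfl : i = j := Fin.ext (by rw [hjn]; exact heq)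
          rw [hLjj, mul_one, hRnjj]
        · have hij : i ≠ j := Fin.ne_of_val_ne (by rw [hjn]; omega)
          have hji : j < i := by rw [Fin.lt_def, hjn]; omega
          have hRij : R n i j = (fun a => Z i a) ⬝ᵥ t j := by
            rw [hR, if_pos ⟨le_of_lt hgt, le_of_eq hjn.symm⟩, if_neg hij, zero_add, ht j]
          rw [hL, if_neg hij, if_pos hji, hb j]
          by_cases hdpos : 0 < d j
          · rw [hRij, if_pos hdpos, dotProduct_smul, smul_eq_mul, ← mul_assoc,
              mul_inv_cancel₀ (ne_of_gt hdpos), one_mul]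
          · have hd0 : d j = 0 := le_antisymm (not_lt.mp hdpos) hdj
            have hcs := psd_cauchy hpsd (Pi.single i 1) (Pi.single j 1)
            rw [hentry, hentry, hentry, hRnjj, hd0, mul_zero] at hcs
            have hz : R n i j = 0 := by nlinarith [sq_nonneg (R n i j)]
            rw [hz, if_neg hdpos, dotProduct_zero, mul_zero]
      have hgen : ∀ i i' : Fin p, ¬ (n + 1 ≤ (i' : ℕ)) →
          R n i i' = d j * L i j * L i' j := by
        intro i i' hi'
        have hi'le : (i' : ℕ) ≤ n := by omega
        rcases lt_or_eq_of_le hi'le with hlt | heqq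
        · rw [hLlow i' hlt, mul_zero, hR, if_neg]
          intro hcon; omega
        · obtain rfl : i' = j := Fin.ext (by rw [hjn]; exact heqq)
          rw [hLjj, mul_one, hcol i]
      have hstep : ∀ i i' : Fin p, R (n + 1) i i' = R n i i' - d j * L i j * L i' j := by
        intro i i'
        by_cases hi' : n + 1 ≤ (i' : ℕ)
        · by_cases hi : n + 1 ≤ (i : ℕ)
          · have h1 : n ≤ (i : ℕ) := le_trans (Nat.le_succ n) hi
            have h1' : n ≤ (i' : ℕ) := le_trans (Nat.le_succ n) hi'
            have hij : i ≠ j := Fin.ne_of_val_ne (by rw [hjn]; omega)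
            have hji : j < i := by rw [Fin.lt_def, hjn]; omega
            have hij' : i' ≠ j := Fin.ne_of_val_ne (by rw [hjn]; omega)
            have hji' : j < i' := by rw [Fin.lt_def, hjn]; omega
            have hM1 : M (n + 1) = if 0 < d j then
                M n - (d j)⁻¹ • vecMulVec (t j) (t j) else M n := hMs j
            have e2 : R (n + 1) i i' = (if i = i' then C i i else 0)
                + ((fun a => Z i a) ⬝ᵥ (M (n + 1) *ᵥ fun a => Z i' a)) := by
              rw [hR]; exact if_pos ⟨hi, hi'⟩
            have e1 : R n i i' = (if i = i' then C i i else 0)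
                + ((fun a => Z i a) ⬝ᵥ (M n *ᵥ fun a => Z i' a)) := by
              rw [hR]; exact if_pos ⟨h1, h1'⟩
            rw [e2, e1, hL i j, if_neg hij, if_pos hji,
              hL i' j, if_neg hij', if_pos hji', hb j]
            by_cases hdpos : 0 < d j
            · rw [hM1, if_pos hdpos, if_pos hdpos,
                dot_sub_vecMulVec, dotProduct_smul, dotProduct_smul,
                dotProduct_comm (t j) (fun a => Z i' a)]
              simp only [smul_eq_mul]
              have hdne : d j ≠ 0 := ne_of_gt hdpos
              set dlt := (if i = i' then C i i else 0) with hdlt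
              field_simp
              ring
            · rw [hM1, if_neg hdpos, if_neg hdpos, dotProduct_zero]
              ring
          · have h0 : R (n + 1) i i' = 0 := by
              rw [hR, if_neg]; intro hcon; exact hi hcon.1
            rw [h0, ← hsymm i i', hgen i' i hi]
            ring
        · have h0 : R (n + 1) i i' = 0 := by
            rw [hR, if_neg]; intro hcon; exact hi' hcon.2
          rw [h0, hgen i i' hi']
          ring
      constructor
      · intro i i'
        have hsplit : (∑ m : Fin p, if (m : ℕ) < n + 1 then d m * L i m * L i' m else 0)
            = (∑ m : Fin p, if (m : ℕ) < n then d m * L i m * L i' m else 0)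
              + d j * L i j * L i' j := by
          have hterm : ∀ m : Fin p, (if (m : ℕ) < n + 1 then d m * L i m * L i' m else 0)
              = (if (m : ℕ) < n then d m * L i m * L i' m else 0)
                + (if m = j then d m * L i m * L i' m else 0) := by
            intro m
            rcases lt_trichotomy (m : ℕ) n with h | h | h
            · rw [if_pos (by omega), if_pos h, if_neg, add_zero]
              intro hc; rw [hc, hjn] at h; omega
            · obtain rfl : m = j := Fin.ext (by rw [hjn]; exact h)
              rw [if_pos (by omega), if_neg (by omega), if_pos rfl, zero_add]
            · rw [if_neg (by omega), if_neg (by omega), if_neg, add_zero]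
              intro hc; rw [hc, hjn] at h; omega
          rw [Finset.sum_congr rfl fun m _ => hterm m, Finset.sum_add_distrib,
            Finset.sum_ite_eq' Finset.univ j (fun m => d m * L i m * L i' m)]
          simp
        rw [hsum i i', hsplit, hstep i i']
        ring
      · refine PosSemidef.of_dotProduct_mulVec_nonneg ?_ ?_
        · apply IsHermitian.ext
          intro i i'
          rw [star_trivial, hstep i' i, hstep i i', hsymm i i']
          ring
        · intro x
          rw [star_trivial]
          set s : ℝ := ∑ i, x i * L i j with hs
          have hq : x ⬝ᵥ R (n + 1) *ᵥ x = x ⬝ᵥ R n *ᵥ x - d j * (s * s) := by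
            rw [dot_expand, dot_expand]
            have hsum2 : ∀ i : Fin p, ∑ i' : Fin p,
                (x i * L i j) * (d j * (x i' * L i' j)) = (x i * L i j) * (d j * s) := by
              intro i
              rw [← Finset.mul_sum, ← Finset.mul_sum]
            calc ∑ i : Fin p, ∑ i' : Fin p, x i * R (n + 1) i i' * x i'
                = ∑ i : Fin p, ∑ i' : Fin p, (x i * R n i i' * x i'
                    - (x i * L i j) * (d j * (x i' * L i' j))) :=
                  Finset.sum_congr rfl fun i _ => Finset.sum_congr rfl fun i' _ => by
                    rw [hstep i i']; ring
              _ = (∑ i : Fin p, ∑ i' : Fin p, x i * R n i i' * x i')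
                    - ∑ i : Fin p, ∑ i' : Fin p, (x i * L i j) * (d j * (x i' * L i' j)) := by
                  rw [← Finset.sum_sub_distrib]
                  exact Finset.sum_congr rfl fun i _ => by rw [← Finset.sum_sub_distrib]
              _ = (∑ i : Fin p, ∑ i' : Fin p, x i * R n i i' * x i') - d j * (s * s) := by
                  rw [Finset.sum_congr rfl fun i _ => hsum2 i, ← Finset.sum_mul]
                  ring
          rw [hq]
          have hQ : 0 ≤ x ⬝ᵥ R n *ᵥ x := by
            have := hpsd.dotProduct_mulVec_nonneg x; rwa [star_trivial] at this
          by_cases hdpos : 0 < d j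
          · have hcs := psd_cauchy hpsd x (Pi.single j 1)
            have h1 : x ⬝ᵥ R n *ᵥ Pi.single j 1 = d j * s := by
              rw [mulVec_single]
              calc x ⬝ᵥ (fun i => R n i j * 1) = ∑ i : Fin p, x i * (d j * L i j) := by
                    simp only [dotProduct, mul_one]
                    exact Finset.sum_congr rfl fun i _ => by rw [hcol i]
                _ = d j * s := by
                    rw [hs, Finset.mul_sum]
                    exact Finset.sum_congr rfl fun i _ => by ring
            have h2 : (Pi.single j 1 : Fin p → ℝ) ⬝ᵥ R n *ᵥ Pi.single j 1 = d j := by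
              rw [hentry, hRnjj]
            rw [h1, h2] at hcs
            have h3 : d j * (d j * (s * s)) ≤ d j * (x ⬝ᵥ R n *ᵥ x) := by nlinarith [hcs]
            have h4 := le_of_mul_le_mul_left h3 hdpos
            linarith
          · have hd0 : d j = 0 := le_antisymm (not_lt.mp hdpos) hdj
            rw [hd0]
            simpa using hQ
  constructor
  · intro j0
    have hpsd := (key (j0 : ℕ) (le_of_lt j0.isLt)).2
    have h1 := hpsd.dotProduct_mulVec_nonneg (Pi.single j0 1)
    rw [star_trivial, mulVec_single] at h1
    simpa [single_dotProduct, hRdiag j0] using h1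
  · ext i i'
    have h := (key p le_rfl).1 i i'
    have hRp : R p i i' = 0 := by
      rw [hR, if_neg]; intro hcon; exact absurd hcon.1 (not_le.mpr i.isLt)
    rw [hRp, add_zero] at h
    rw [h]
    rw [Matrix.mul_apply]
    refine Finset.sum_congr rfl fun m _ => ?_
    rw [Matrix.mul_diagonal, Matrix.transpose_apply, if_pos m.isLt]
    ring
end

section
/- Let L be unit lower triangular with L_{ij} = z_i^T b_j for i > j (z_i, b_j ∈ R^k rows of Z, B ∈ R^{p×k}), Δ diagonal PSD, and v ∈ R^p. Define w_1 = 0 ∈ R^k and iteratively u_j = √(Δ_{jj}) v_j + z_j^T w_j, w_{j+1} = w_j + √(Δ_{jj}) v_j b_j. Then u = L √Δ v. -/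
open Matrix

/-- Correctness of the fast `O(pk)` multiplication `u = L √Δ v` where `L` is unit lower
triangular with `L_{ij} = z_iᵀ b_j` for `i > j`, computed via the running buffer
`w_{j+1} = w_j + √(Δ_{jj}) v_j b_j`, `u_j = √(Δ_{jj}) v_j + z_jᵀ w_j`. -/
theorem fast_cholesky_multiplication {p k : ℕ}
    (Z B : Matrix (Fin p) (Fin k) ℝ) (d : Fin p → ℝ) (hd : ∀ j, 0 ≤ d j)
    (v : Fin p → ℝ)
    (L : Matrix (Fin p) (Fin p) ℝ)
    (hL : ∀ i i' : Fin p, L i i' =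
      if i = i' then 1 else if i' < i then (fun a => Z i a) ⬝ᵥ (fun a => B i' a) else 0)
    (w : ℕ → Fin k → ℝ) (hw0 : w 0 = 0)
    (hw : ∀ j : Fin p, w (j + 1) = w j + (Real.sqrt (d j) * v j) • (fun a => B j a))
    (u : Fin p → ℝ)
    (hu : ∀ j : Fin p, u j = Real.sqrt (d j) * v j + (fun a => Z j a) ⬝ᵥ w j) :
    u = L *ᵥ (fun i => Real.sqrt (d i) * v i) := by
  set s : Fin p → ℝ := fun i => Real.sqrt (d i) * v i with hs
  have key : ∀ n : ℕ, n ≤ p →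
      w n = fun a => ∑ i : Fin p, if (i : ℕ) < n then s i * B i a else 0 := by
    intro n
    induction n with
    | zero =>
      intro _
      funext a
      simp [hw0]
    | succ m ih =>
      intro hm
      have hmp : m < p := Nat.lt_of_succ_le hm
      have hrec := hw ⟨m, hmp⟩
      simp only [Fin.val_mk] at hrec
      rw [hrec, ih (Nat.le_of_lt hmp)]
      funext a
      have hsplit : ∀ i : Fin p,
          (if (i : ℕ) < m + 1 then s i * B i a else 0) =
          (if (i : ℕ) < m then s i * B i a else 0) +
          (if i = ⟨m, hmp⟩ then s i * B i a else 0) := by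
        intro i
        by_cases h1 : (i : ℕ) < m
        · have h2 : i ≠ ⟨m, hmp⟩ := by
            intro h; subst h; simp at h1
          simp [h1, h2, Nat.lt_succ_of_lt h1]
        · by_cases h2 : i = ⟨m, hmp⟩
          · subst h2
            simp [h1]
          · have h3 : ¬ (i : ℕ) < m + 1 := by
              intro h
              have : (i : ℕ) = m := by omega
              exact h2 (Fin.ext this)
            simp [h1, h2, h3]
      simp only [Pi.add_apply, Pi.smul_apply, smul_eq_mul]
      rw [Finset.sum_congr rfl (fun i _ => hsplit i), Finset.sum_add_distrib,
        Finset.sum_ite_eq' Finset.univ (⟨m, hmp⟩ : Fin p) (fun i => s i * B i a)]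
      simp
      exact Or.inl rfl
  funext j
  rw [hu j]
  have hwj := key (j : ℕ) (Nat.le_of_lt j.isLt)
  rw [hwj]
  simp only [mulVec, dotProduct]
  have hdot : ∑ a, Z j a * (∑ i : Fin p, if (i : ℕ) < (j : ℕ) then s i * B i a else 0)
      = ∑ i : Fin p, if i < j then (∑ a, Z j a * B i a) * s i else 0 := by
    simp_rw [Finset.mul_sum]
    rw [Finset.sum_comm]
    apply Finset.sum_congr rfl
    intro i _
    by_cases h : i < j
    · have h' : (i : ℕ) < (j : ℕ) := h
      simp only [h, h', if_true]
      rw [Finset.sum_mul]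
      apply Finset.sum_congr rfl
      intro a _
      ring
    · have h' : ¬ (i : ℕ) < (j : ℕ) := h
      simp [h, h']
  have hR : ∑ i : Fin p, L j i * s i
      = s j + ∑ i : Fin p, if i < j then (∑ a, Z j a * B i a) * s i else 0 := by
    have : ∀ i : Fin p, L j i * s i =
        (if i = j then s i else 0) + (if i < j then (∑ a, Z j a * B i a) * s i else 0) := by
      intro i
      rw [hL j i]
      by_cases h1 : j = i
      · subst h1
        simp
      · by_cases h2 : i < j
        · simp [h1, h2, Ne.symm h1, dotProduct]
        · simp [h1, h2, Ne.symm h1]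
    rw [Finset.sum_congr rfl (fun i _ => this i), Finset.sum_add_distrib,
      Finset.sum_ite_eq' Finset.univ j (fun i => s i)]
    simp
  rw [hR, hdot]
end
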